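/- Let S be a commutative local ring and n ≥ 1. Then every S-algebra automorphism of the matrix algebra Mₙ(S) is inner, i.e., of the form X ↦ U X U⁻¹ for some invertible matrix U ∈ GLₙ(S). -/

import Mathlib

open Matrix

private lemma sum_mulVec' {m : Type*} [Fintype m] {R : Type*} [CommRing R] {ι : Type*}
    (s : Finset ι) (f : ι → Matrix m m R) (w : m → R) :
    (∑ i ∈ s, f i) *ᵥ w = ∑ i ∈ s, f i *ᵥ w := by
  classical
  induction s using Finset.induction_on with
  | empty => simp [Matrix.zero_mulVec]
  | insert _ _ h ih => simp [Finset.sum_insert h, Matrix.add_mulVec, ih]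

private lemma mulVec_sum' {m : Type*} [Fintype m] {R : Type*} [CommRing R] {ι : Type*}
    (s : Finset ι) (A : Matrix m m R) (w : ι → m → R) :
    A *ᵥ (∑ i ∈ s, w i) = ∑ i ∈ s, A *ᵥ w i := by
  rw [← Matrix.mulVecLin_apply, map_sum]
  simp [Matrix.mulVecLin_apply]

theorem matrix_algAut_inner (S : Type*) [CommRing S] [IsLocalRing S] (n : ℕ) (hn : 1 ≤ n)
    (α : Matrix (Fin n) (Fin n) S ≃ₐ[S] Matrix (Fin n) (Fin n) S) :
    ∃ U : (Matrix (Fin n) (Fin n) S)ˣ,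
      ∀ X : Matrix (Fin n) (Fin n) S, α X = (U : Matrix (Fin n) (Fin n) S) * X * ((U⁻¹ : (Matrix (Fin n) (Fin n) S)ˣ) : Matrix (Fin n) (Fin n) S) := by
  classical
  haveI : NeZero n := ⟨by omega⟩
  set M := Matrix (Fin n) (Fin n) S with hM
  let F : Fin n → Fin n → M := fun i j => α (Matrix.single i j 1)
  have hFmul : ∀ i j k l, F i j * F k l = if j = k then F i l else 0 := by
    intro i j k l
    rcases eq_or_ne j k with rfl | h
    · rw [show α (single i j 1) * α (single j l 1)
            = α (single i j 1 * single j l 1) from (map_mul α _ _).symm]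
      simp [F]
    · rw [show α (single i j 1) * α (single k l 1)
            = α (single i j 1 * single k l 1) from (map_mul α _ _).symm,
        Matrix.single_mul_single_of_ne (h := h), map_zero]
      simp [h]
  have hFone : ∑ i, F i i = (1 : M) := by
    rw [← _root_.map_sum]
    have : (∑ i, Matrix.single i i (1 : S)) = (1 : M) := by
      ext a b
      simp only [Matrix.single, Matrix.sum_apply, Matrix.of_apply]
      rcases eq_or_ne a b with rfl | h
      · rw [Matrix.one_apply_eq, Finset.sum_eq_single a]
        · simp
        · intro i _ hia
          rw [if_neg]
          rintro ⟨rfl, -⟩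
          exact hia rfl
        · simp
      · rw [Matrix.one_apply_ne h, Finset.sum_eq_zero]
        intro i _
        rw [if_neg]
        rintro ⟨rfl, rfl⟩
        exact h rfl
    rw [this, _root_.map_one]
  have hα : ∀ X : M, α X = ∑ i, ∑ j, X i j • F i j := by
    intro X
    conv_lhs => rw [Matrix.matrix_eq_sum_single X]
    rw [_root_.map_sum]
    refine Finset.sum_congr rfl fun i _ => ?_
    rw [_root_.map_sum]
    refine Finset.sum_congr rfl fun j _ => ?_
    have : Matrix.single i j (X i j) = X i j • Matrix.single i j (1 : S) := by
      rw [Matrix.smul_single, smul_eq_mul, mul_one]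
    rw [this, _root_.map_smul]
  -- the module picture
  let P : Submodule S (Fin n → S) := LinearMap.range (F 0 0).mulVecLin
  have hFPmem : ∀ (i : Fin n) (w : Fin n → S), (F 0 i) *ᵥ w ∈ P := by
    intro i w
    refine ⟨(F 0 i) *ᵥ w, ?_⟩
    rw [Matrix.mulVecLin_apply, Matrix.mulVec_mulVec, hFmul, if_pos rfl]
  have hPfix : ∀ p : P, (F 0 0) *ᵥ (p : Fin n → S) = (p : Fin n → S) := by
    rintro ⟨_, w, rfl⟩
    show (F 0 0) *ᵥ ((F 0 0) *ᵥ w) = (F 0 0) *ᵥ w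
    rw [Matrix.mulVec_mulVec, hFmul, if_pos rfl]
  have hsum_colv : ∀ w : Fin n → S, ∑ i, (F i 0) *ᵥ ((F 0 i) *ᵥ w) = w := by
    intro w
    have h1 : ∀ i : Fin n, (F i 0) *ᵥ ((F 0 i) *ᵥ w) = (F i i) *ᵥ w := by
      intro i
      rw [Matrix.mulVec_mulVec, hFmul, if_pos rfl]
    rw [Finset.sum_congr rfl fun i _ => h1 i, ← sum_mulVec', hFone, Matrix.one_mulVec]
  -- P is finite projective hence free
  haveI : Module.Finite S P := Module.Finite.range _
  haveI : Module.Projective S P := by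
    refine Module.Projective.of_split P.subtype (F 0 0).mulVecLin.rangeRestrict ?_
    refine LinearMap.ext fun p => Subtype.ext ?_
    exact hPfix p
  haveI : Module.FinitePresentation S P := Module.finitePresentation_of_projective S P
  haveI : Module.Free S P := Module.free_of_flat_of_isLocalRing
  -- (Fin n → S) ≃ P^n
  let e : (Fin n → S) ≃ₗ[S] (Fin n → P) :=
    { toFun := fun w i => ⟨(F 0 i) *ᵥ w, hFPmem i w⟩
      map_add' := by intro x y; funext i; exact Subtype.ext (by simp [Matrix.mulVec_add])
      map_smul' := by intro c x; funext i; exact Subtype.ext (by simp [Matrix.mulVec_smul])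
      invFun := fun p => ∑ i, (F i 0) *ᵥ (p i : Fin n → S)
      left_inv := by
        intro w
        exact hsum_colv w
      right_inv := by
        intro p
        funext j
        refine Subtype.ext ?_
        show (F 0 j) *ᵥ (∑ i, (F i 0) *ᵥ (p i : Fin n → S)) = (p j : Fin n → S)
        rw [mulVec_sum']
        have h2 : ∀ i : Fin n, (F 0 j) *ᵥ ((F i 0) *ᵥ (p i : Fin n → S))
            = if i = j then (F 0 0) *ᵥ (p i : Fin n → S) else 0 := by
          intro i
          rw [Matrix.mulVec_mulVec, hFmul]
          rcases eq_or_ne i j with rfl | h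
          · simp
          · rw [if_neg (fun hji => h hji.symm), if_neg h, Matrix.zero_mulVec]
        rw [Finset.sum_congr rfl fun i _ => h2 i, Finset.sum_ite_eq' Finset.univ j]
        simp [hPfix (p j)] }
  -- rank computation: P is free of rank 1
  have hrk : Module.finrank S P = 1 := by
    have h1 : Module.finrank S (Fin n → S) = n := by
      rw [Module.finrank_pi]; simp
    have h2 := e.finrank_eq
    rw [h1, Module.finrank_pi_fintype] at h2
    simp only [Finset.sum_const, Finset.card_univ, Fintype.card_fin, smul_eq_mul] at h2
    exact (Nat.eq_of_mul_eq_mul_left (show 0 < n by omega) (by rw [mul_one]; exact h2)).symm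
  -- choose a generator of P
  obtain ⟨v, hv, hv0⟩ : ∃ v : P, (∀ p : P, ∃ c : S, c • v = p) ∧ ∀ c : S, c • v = 0 → c = 0 := by
    let b := Module.Free.chooseBasis S P
    haveI : Subsingleton (Module.Free.ChooseBasisIndex S P) := by
      rw [← Fintype.card_le_one_iff_subsingleton, ← Module.finrank_eq_card_chooseBasisIndex, hrk]
    have hne : Nonempty (Module.Free.ChooseBasisIndex S P) := by
      rw [← Fintype.card_pos_iff, ← Module.finrank_eq_card_chooseBasisIndex, hrk]; omega
    obtain ⟨i₀⟩ := hne
    refine ⟨b i₀, fun p => ⟨b.repr p i₀, ?_⟩, fun c hc => ?_⟩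
    · have := b.sum_repr p
      rwa [Finset.sum_eq_single i₀ (fun i _ hi => absurd (Subsingleton.elim i i₀) hi)
        (fun h => absurd (Finset.mem_univ i₀) h)] at this
    · have := congrArg (fun q => b.repr q i₀) hc
      simpa using this
  set vv : Fin n → S := (v : Fin n → S) with hvv
  have hvvfix : (F 0 0) *ᵥ vv = vv := hPfix v
  let colV : Fin n → (Fin n → S) := fun j => (F j 0) *ᵥ vv
  let U₀ : M := Matrix.of fun i j => colV j i
  have hUmv : ∀ w : Fin n → S, U₀ *ᵥ w = ∑ j, w j • colV j := by
    intro w; funext i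
    simp [U₀, Matrix.mulVec, dotProduct, Finset.sum_apply, mul_comm]
  have hkey : ∀ (X : M) (j : Fin n), α X * F j 0 = ∑ l, X l j • F l 0 := by
    intro X j
    rw [hα X, Finset.sum_mul]
    have h1 : ∀ i : Fin n, (∑ k, X i k • F i k) * F j 0 = X i j • F i 0 := by
      intro i
      rw [Finset.sum_mul]
      have h2 : ∀ k : Fin n, (X i k • F i k) * F j 0 = if k = j then X i k • F i 0 else 0 := by
        intro k
        rw [smul_mul_assoc, hFmul]
        rcases eq_or_ne k j with rfl | h
        · simp
        · rw [if_neg h, if_neg h, smul_zero]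
      rw [Finset.sum_congr rfl fun k _ => h2 k, Finset.sum_ite_eq' Finset.univ j]
      simp
    rw [Finset.sum_congr rfl fun i _ => h1 i]
  have hcomm : ∀ X : M, α X * U₀ = U₀ * X := by
    intro X
    ext i j
    rw [Matrix.mul_apply, Matrix.mul_apply]
    have hL : ∑ k, (α X) i k * U₀ k j = ((α X * F j 0) *ᵥ vv) i := by
      rw [← Matrix.mulVec_mulVec]
      simp [U₀, colV, Matrix.mulVec, dotProduct]
    have hR : ∑ k, U₀ i k * X k j = (∑ l, X l j • colV l) i := by
      simp [U₀, colV, Finset.sum_apply, mul_comm]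
    rw [hL, hR, hkey X j, sum_mulVec']
    have h6 : ∀ l : Fin n, (X l j • F l 0) *ᵥ vv = X l j • colV l := fun l =>
      Matrix.smul_mulVec _ _ _
    rw [Finset.sum_congr rfl fun l _ => h6 l]
  have hsurj : Function.Surjective U₀.mulVecLin := by
    intro w
    choose c hc using fun i : Fin n => hv ⟨(F 0 i) *ᵥ w, hFPmem i w⟩
    refine ⟨c, ?_⟩
    rw [Matrix.mulVecLin_apply, hUmv]
    have h3 : ∀ i, c i • colV i = (F i 0) *ᵥ ((F 0 i) *ᵥ w) := by
      intro i
      have h4 : c i • vv = (F 0 i) *ᵥ w := congrArg Subtype.val (hc i)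
      show c i • ((F i 0) *ᵥ vv) = _
      rw [← Matrix.mulVec_smul, h4]
    rw [Finset.sum_congr rfl fun i _ => h3 i, hsum_colv]
  have hinj : Function.Injective U₀.mulVecLin := by
    rw [← LinearMap.ker_eq_bot, Matrix.ker_mulVecLin_eq_bot_iff]
    intro w hw
    funext i
    have h0 : (F 0 i) *ᵥ (U₀ *ᵥ w) = w i • vv := by
      rw [hUmv, mulVec_sum']
      have h5 : ∀ j, (F 0 i) *ᵥ (w j • colV j) = if j = i then w j • vv else 0 := by
        intro j
        show (F 0 i) *ᵥ (w j • ((F j 0) *ᵥ vv)) = _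
        rw [Matrix.mulVec_smul, Matrix.mulVec_mulVec, hFmul]
        rcases eq_or_ne j i with rfl | h
        · rw [if_pos rfl, if_pos rfl, hvvfix]
        · rw [if_neg (fun hij => h hij.symm), if_neg h, Matrix.zero_mulVec, smul_zero]
      rw [Finset.sum_congr rfl fun j _ => h5 j, Finset.sum_ite_eq' Finset.univ i]
      simp
    rw [hw, Matrix.mulVec_zero] at h0
    have h6 : w i • v = 0 := Subtype.ext (by simpa [hvv] using h0.symm)
    simpa using hv0 _ h6
  have hbij : Function.Bijective U₀.mulVecLin := ⟨hinj, hsurj⟩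
  let eU : (Fin n → S) ≃ₗ[S] (Fin n → S) := LinearEquiv.ofBijective U₀.mulVecLin hbij
  let B : M := LinearMap.toMatrix' (eU.symm : (Fin n → S) →ₗ[S] (Fin n → S))
  have hmvB : B.mulVecLin = (eU.symm : (Fin n → S) →ₗ[S] (Fin n → S)) := by
    rw [← Matrix.toLin'_apply', Matrix.toLin'_toMatrix']
  have hmvinj : Function.Injective (Matrix.mulVecLin : M → (Fin n → S) →ₗ[S] (Fin n → S)) := by
    intro A A' h
    exact Matrix.toLin'.injective (by rw [Matrix.toLin'_apply', Matrix.toLin'_apply']; exact h)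
  have hUeU : U₀.mulVecLin = (eU : (Fin n → S) →ₗ[S] (Fin n → S)) := rfl
  have hUB : U₀ * B = 1 := by
    apply hmvinj
    rw [Matrix.mulVecLin_mul, hmvB, Matrix.mulVecLin_one, hUeU]
    exact LinearMap.ext fun x => eU.apply_symm_apply x
  have hBU : B * U₀ = 1 := by
    apply hmvinj
    rw [Matrix.mulVecLin_mul, hmvB, Matrix.mulVecLin_one, hUeU]
    exact LinearMap.ext fun x => eU.symm_apply_apply x
  refine ⟨⟨U₀, B, hUB, hBU⟩, fun X => ?_⟩
  show α X = U₀ * X * B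
  calc α X = α X * (U₀ * B) := by rw [hUB, mul_one]
    _ = (α X * U₀) * B := by rw [mul_assoc]
    _ = U₀ * X * B := by rw [hcomm X]
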